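/- Let d ≥ 1, let δ > 0, and let X_1, …, X_k be finite subsets of ℝ^d such that for every i ∈ {1, …, k} the diameter of X_i is at most Δ. If z is drawn uniformly at random from the interval [0, δ], then Pr[ ∃ i ∈ {1, …, k}, ∃ x ∈ X_i, ∃ y ∈ X_i : g_{δ,z}(x) ≠ g_{δ,z}(y) ] ≤ dkΔ/δ. -/

import Mathlib

open MeasureTheory ENNReal

/-- The randomly shifted grid function `g_{δ,z} : ℝ^d → ℤ^d`,
`g_{δ,z}(x) = (⌊(x₁ − z)/δ⌋, …, ⌊(x_d − z)/δ⌋)`. -/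
noncomputable def shiftedGrid (d : ℕ) (δ z : ℝ) (x : EuclideanSpace ℝ (Fin d)) :
    Fin d → ℤ :=
  fun i => ⌊(x i - z) / δ⌋


lemma floorFn_antitoneOn (c δ : ℝ) (hδ : 0 < δ) (s : Set ℝ) :
    AntitoneOn (fun z : ℝ => ((⌊(c - z) / δ⌋ : ℤ) : ℝ)) s := by
  intro a _ b _ hab
  have h : (c - b) / δ ≤ (c - a) / δ := by gcongr
  dsimp only
  exact_mod_cast Int.floor_le_floor h

lemma floorFn_intervalIntegrable (c δ : ℝ) (hδ : 0 < δ) (u v : ℝ) :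
    IntervalIntegrable (fun z : ℝ => ((⌊(c - z) / δ⌋ : ℤ) : ℝ)) volume u v :=
  (floorFn_antitoneOn c δ hδ _).intervalIntegrable

lemma integral_floorFn (δ : ℝ) (hδ : 0 < δ) (c : ℝ) :
    ∫ z in (0:ℝ)..δ, ((⌊(c - z) / δ⌋ : ℤ) : ℝ) = c - δ := by
  set q : ℤ := ⌊c / δ⌋ with hq
  set r : ℝ := c - q * δ with hrdef
  have hr0 : 0 ≤ r := by
    have := Int.floor_le (c / δ)
    have : (q : ℝ) * δ ≤ c := by
      rw [← le_div_iff₀ hδ] at *; linarith [this]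
    simp [hrdef]; linarith
  have hrδ : r < δ := by
    have := Int.lt_floor_add_one (c / δ)
    have : c < ((q : ℝ) + 1) * δ := by
      rw [← div_lt_iff₀ hδ]; push_cast; linarith [this]
    simp [hrdef]; nlinarith
  have key1 : ∀ z : ℝ, r - δ < z → z ≤ r → ⌊(c - z) / δ⌋ = q := by
    intro z h1 h2
    rw [Int.floor_eq_iff]
    constructor
    · rw [le_div_iff₀ hδ]; linarith
    · rw [div_lt_iff₀ hδ]; push_cast; linarith
  have key2 : ∀ z : ℝ, r < z → z ≤ r + δ → ⌊(c - z) / δ⌋ = q - 1 := by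
    intro z h1 h2
    rw [Int.floor_eq_iff]
    constructor
    · push_cast; rw [le_div_iff₀ hδ]; linarith
    · push_cast; rw [div_lt_iff₀ hδ]; linarith
  have hsplit : (∫ z in (0:ℝ)..r, ((⌊(c - z) / δ⌋ : ℤ) : ℝ))
      + (∫ z in r..δ, ((⌊(c - z) / δ⌋ : ℤ) : ℝ))
      = ∫ z in (0:ℝ)..δ, ((⌊(c - z) / δ⌋ : ℤ) : ℝ) :=
    intervalIntegral.integral_add_adjacent_intervals
      (floorFn_intervalIntegrable c δ hδ 0 r) (floorFn_intervalIntegrable c δ hδ r δ)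
  have h1 : (∫ z in (0:ℝ)..r, ((⌊(c - z) / δ⌋ : ℤ) : ℝ)) = r * q := by
    rw [intervalIntegral.integral_congr (g := fun _ => (q : ℝ))]
    · simp
    · intro z hz
      rw [Set.uIcc_of_le hr0] at hz
      dsimp only
      exact_mod_cast congrArg (Int.cast : ℤ → ℝ) (key1 z (by linarith [hz.1]) hz.2)
  have h2 : (∫ z in r..δ, ((⌊(c - z) / δ⌋ : ℤ) : ℝ)) = (δ - r) * (q - 1) := by
    rw [intervalIntegral.integral_of_le hrδ.le]
    rw [setIntegral_congr_fun measurableSet_Ioc (g := fun _ => ((q : ℝ) - 1))]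
    · simp [Real.volume_Ioc, ENNReal.toReal_ofReal (by linarith : (0:ℝ) ≤ δ - r), hrδ.le]
    · intro z hz
      have := key2 z hz.1 (by linarith [hz.2])
      push_cast [this]; ring
  have hqδ : (q : ℝ) * δ = c - r := by rw [hrdef]; ring
  rw [← hsplit, h1, h2]; nlinarith [hqδ]

lemma volume_floor_ne_le (δ : ℝ) (hδ : 0 < δ) (a b : ℝ) (hab : a ≤ b) :
    volume {z ∈ Set.Icc (0:ℝ) δ | ⌊(a - z) / δ⌋ ≠ ⌊(b - z) / δ⌋} ≤ ENNReal.ofReal (b - a) := by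
  set g : ℝ → ℝ := fun z => ((⌊(b - z) / δ⌋ : ℤ) : ℝ) - ((⌊(a - z) / δ⌋ : ℤ) : ℝ) with hg
  have hmf : ∀ c : ℝ, Measurable (fun z : ℝ => ((⌊(c - z) / δ⌋ : ℤ) : ℝ)) := by
    intro c
    exact measurable_from_top.comp
      (Int.measurable_floor.comp ((measurable_const.sub measurable_id).div_const δ))
  have hg_meas : Measurable g := (hmf b).sub (hmf a)
  have hle : ∀ z : ℝ, ⌊(a - z) / δ⌋ ≤ ⌊(b - z) / δ⌋ := by
    intro z
    exact Int.floor_le_floor (by gcongr)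
  have hg_nonneg : ∀ z, 0 ≤ g z := by
    intro z
    have := hle z
    simp only [hg, sub_nonneg]
    exact_mod_cast this
  set S := {z ∈ Set.Icc (0:ℝ) δ | ⌊(a - z) / δ⌋ ≠ ⌊(b - z) / δ⌋} with hS
  have hsub : S ⊆ Set.Icc (0:ℝ) δ := fun z hz => hz.1
  have hS1 : ∀ z ∈ S, (1 : ℝ≥0∞) ≤ ENNReal.ofReal (g z) := by
    intro z hz
    have h1 : ⌊(a - z) / δ⌋ + 1 ≤ ⌊(b - z) / δ⌋ := lt_of_le_of_ne (hle z) hz.2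
    have h2 : (1 : ℝ) ≤ g z := by
      simp only [hg]
      have : ((⌊(a - z) / δ⌋ : ℤ) : ℝ) + 1 ≤ ((⌊(b - z) / δ⌋ : ℤ) : ℝ) := by exact_mod_cast h1
      linarith
    calc (1 : ℝ≥0∞) = ENNReal.ofReal 1 := by simp
      _ ≤ ENNReal.ofReal (g z) := ENNReal.ofReal_le_ofReal h2
  have hint : IntegrableOn g (Set.Icc (0:ℝ) δ) volume := by
    rw [integrableOn_Icc_iff_integrableOn_Ioc]
    exact ((floorFn_intervalIntegrable b δ hδ 0 δ).sub (floorFn_intervalIntegrable a δ hδ 0 δ)).1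
  have hval : ∫ z in Set.Icc (0:ℝ) δ, g z = b - a := by
    rw [integral_Icc_eq_integral_Ioc, ← intervalIntegral.integral_of_le hδ.le,
      intervalIntegral.integral_sub (floorFn_intervalIntegrable b δ hδ 0 δ)
        (floorFn_intervalIntegrable a δ hδ 0 δ),
      integral_floorFn δ hδ a, integral_floorFn δ hδ b]
    ring
  calc volume S = ∫⁻ _ in S, 1 := (setLIntegral_one S).symm
    _ ≤ ∫⁻ z in S, ENNReal.ofReal (g z) := setLIntegral_mono hg_meas.ennreal_ofReal hS1
    _ ≤ ∫⁻ z in Set.Icc (0:ℝ) δ, ENNReal.ofReal (g z) := lintegral_mono_set hsub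
    _ = ENNReal.ofReal (∫ z in Set.Icc (0:ℝ) δ, g z) :=
        (ofReal_integral_eq_lintegral_ofReal hint (Filter.Eventually.of_forall hg_nonneg)).symm
    _ = ENNReal.ofReal (b - a) := by rw [hval]
lemma coord_dist_le {d : ℕ} (x y : EuclideanSpace ℝ (Fin d)) (j : Fin d) :
    dist (x j) (y j) ≤ dist x y := by
  rw [EuclideanSpace.dist_eq]
  have h1 : dist (x j) (y j) ^ 2 ≤ ∑ i, dist (x i) (y i) ^ 2 :=
    Finset.single_le_sum (f := fun i => dist (x i) (y i) ^ 2)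
      (fun i _ => sq_nonneg _) (Finset.mem_univ j)
  have := Real.sqrt_le_sqrt h1
  rwa [Real.sqrt_sq dist_nonneg] at this

/-- **Lemma 7 of the paper.** Let `X₁, …, X_k ⊆ ℝ^d` be finite
sets, each of diameter at most `Δ`.  If `z` is drawn uniformly at random from
`[0, δ]`, then the probability that some `X_i` contains two points mapped to
different grid cells by `g_{δ,z}` is at most `dkΔ/δ`. -/
theorem prob_shiftedGrid_splits_many (d k : ℕ) (hd : 1 ≤ d) (δ Δ : ℝ) (hδ : 0 < δ)
    (X : Fin k → Finset (EuclideanSpace ℝ (Fin d)))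
    (hX : ∀ i, ∀ x ∈ X i, ∀ y ∈ X i, dist x y ≤ Δ) :
    (volume (Set.Icc (0 : ℝ) δ))⁻¹ *
        volume {z ∈ Set.Icc (0 : ℝ) δ |
          ∃ i, ∃ x ∈ X i, ∃ y ∈ X i, shiftedGrid d δ z x ≠ shiftedGrid d δ z y} ≤
      ENNReal.ofReal (d * k * Δ / δ) := by
  set E := {z ∈ Set.Icc (0 : ℝ) δ |
      ∃ i, ∃ x ∈ X i, ∃ y ∈ X i, shiftedGrid d δ z x ≠ shiftedGrid d δ z y} with hE
  rcases lt_or_ge Δ 0 with hΔ | hΔ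
  · -- all X i empty, E empty
    have hempty : ∀ i, X i = ∅ := by
      intro i
      rw [Finset.eq_empty_iff_forall_notMem]
      intro x hx
      have := hX i x hx x hx
      simp at this
      linarith
    have : E = ∅ := by
      rw [hE, Set.eq_empty_iff_forall_notMem]
      rintro z ⟨-, i, x, hx, -⟩
      simp [hempty i] at hx
    simp [this]
  · -- main case
    have key : ∀ i : Fin k,
        volume {z ∈ Set.Icc (0:ℝ) δ |
          ∃ x ∈ X i, ∃ y ∈ X i, shiftedGrid d δ z x ≠ shiftedGrid d δ z y}
          ≤ (d : ℝ≥0∞) * ENNReal.ofReal Δ := by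
      intro i
      rcases (X i).eq_empty_or_nonempty with h | h
      · simp [h]
      · set a : Fin d → ℝ := fun j => (X i).inf' h (fun x => x j) with ha
        set b : Fin d → ℝ := fun j => (X i).sup' h (fun x => x j) with hb
        have hia : ∀ j, ∀ x ∈ X i, a j ≤ x j := by
          intro j x hx
          simp only [ha]
          exact Finset.inf'_le _ hx
        have hib : ∀ j, ∀ x ∈ X i, x j ≤ b j := by
          intro j x hx
          simp only [hb]
          exact Finset.le_sup' (fun x => x j) hx
        have hab : ∀ j, a j ≤ b j := by
          intro j
          obtain ⟨x, hx⟩ := h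
          exact le_trans (hia j x hx) (hib j x hx)
        have hsub : {z ∈ Set.Icc (0:ℝ) δ |
            ∃ x ∈ X i, ∃ y ∈ X i, shiftedGrid d δ z x ≠ shiftedGrid d δ z y}
            ⊆ ⋃ j : Fin d, {z ∈ Set.Icc (0:ℝ) δ | ⌊(a j - z) / δ⌋ ≠ ⌊(b j - z) / δ⌋} := by
          rintro z ⟨hzI, x, hx, y, hy, hne⟩
          obtain ⟨j, hj⟩ := Function.ne_iff.mp hne
          refine Set.mem_iUnion.mpr ⟨j, hzI, fun heq => ?_⟩
          have mono : ∀ u v : ℝ, u ≤ v → ⌊(u - z) / δ⌋ ≤ ⌊(v - z) / δ⌋ := by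
            intro u v huv
            exact Int.floor_le_floor (by gcongr)
          have hxa : ⌊(a j - z) / δ⌋ ≤ ⌊(x j - z) / δ⌋ := mono _ _ (hia j x hx)
          have hxb : ⌊(x j - z) / δ⌋ ≤ ⌊(b j - z) / δ⌋ := mono _ _ (hib j x hx)
          have hya : ⌊(a j - z) / δ⌋ ≤ ⌊(y j - z) / δ⌋ := mono _ _ (hia j y hy)
          have hyb : ⌊(y j - z) / δ⌋ ≤ ⌊(b j - z) / δ⌋ := mono _ _ (hib j y hy)
          apply hj
          show ⌊(x j - z) / δ⌋ = ⌊(y j - z) / δ⌋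
          omega
        have hbad : ∀ j : Fin d,
            volume {z ∈ Set.Icc (0:ℝ) δ | ⌊(a j - z) / δ⌋ ≠ ⌊(b j - z) / δ⌋}
              ≤ ENNReal.ofReal Δ := by
          intro j
          refine le_trans (volume_floor_ne_le δ hδ (a j) (b j) (hab j)) ?_
          apply ENNReal.ofReal_le_ofReal
          obtain ⟨x, hx, hxe⟩ := Finset.exists_mem_eq_sup' h (fun x => x j)
          obtain ⟨y, hy, hye⟩ := Finset.exists_mem_eq_inf' h (fun x => x j)
          have heq : b j - a j = x j - y j := by
            simp only [ha, hb]
            rw [hxe, hye]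
          calc b j - a j = x j - y j := heq
            _ ≤ |x j - y j| := le_abs_self _
            _ = dist (x j) (y j) := (Real.dist_eq _ _).symm
            _ ≤ dist x y := coord_dist_le x y j
            _ ≤ Δ := hX i x hx y hy
        calc volume {z ∈ Set.Icc (0:ℝ) δ |
              ∃ x ∈ X i, ∃ y ∈ X i, shiftedGrid d δ z x ≠ shiftedGrid d δ z y}
            ≤ volume (⋃ j : Fin d, {z ∈ Set.Icc (0:ℝ) δ |
                ⌊(a j - z) / δ⌋ ≠ ⌊(b j - z) / δ⌋}) := measure_mono hsub
          _ ≤ ∑' j : Fin d, volume {z ∈ Set.Icc (0:ℝ) δ |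
                ⌊(a j - z) / δ⌋ ≠ ⌊(b j - z) / δ⌋} := measure_iUnion_le _
          _ ≤ ∑' _j : Fin d, ENNReal.ofReal Δ := ENNReal.tsum_le_tsum hbad
          _ = (d : ℝ≥0∞) * ENNReal.ofReal Δ := by
              simp [tsum_fintype, Finset.sum_const, nsmul_eq_mul]
    have hEunion : E ⊆ ⋃ i : Fin k, {z ∈ Set.Icc (0:ℝ) δ |
        ∃ x ∈ X i, ∃ y ∈ X i, shiftedGrid d δ z x ≠ shiftedGrid d δ z y} := by
      rintro z ⟨hzI, i, hrest⟩
      exact Set.mem_iUnion.mpr ⟨i, hzI, hrest⟩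
    have hvolE : volume E ≤ (k : ℝ≥0∞) * ((d : ℝ≥0∞) * ENNReal.ofReal Δ) := by
      calc volume E ≤ ∑' i : Fin k, volume {z ∈ Set.Icc (0:ℝ) δ |
            ∃ x ∈ X i, ∃ y ∈ X i, shiftedGrid d δ z x ≠ shiftedGrid d δ z y} :=
          le_trans (measure_mono hEunion) (measure_iUnion_le _)
        _ ≤ ∑' _i : Fin k, (d : ℝ≥0∞) * ENNReal.ofReal Δ := ENNReal.tsum_le_tsum key
        _ = (k : ℝ≥0∞) * ((d : ℝ≥0∞) * ENNReal.ofReal Δ) := by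
            simp [tsum_fintype, Finset.sum_const, nsmul_eq_mul]
    rw [Real.volume_Icc, sub_zero]
    calc (ENNReal.ofReal δ)⁻¹ * volume E
        ≤ (ENNReal.ofReal δ)⁻¹ * ((k : ℝ≥0∞) * ((d : ℝ≥0∞) * ENNReal.ofReal Δ)) :=
          mul_le_mul_right hvolE _
      _ = ENNReal.ofReal (d * k * Δ / δ) := by
          rw [← ENNReal.ofReal_inv_of_pos hδ, ← ENNReal.ofReal_natCast k,
            ← ENNReal.ofReal_natCast d, ← ENNReal.ofReal_mul (by positivity),
            ← ENNReal.ofReal_mul (by positivity), ← ENNReal.ofReal_mul (by positivity)]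
          congr 1
          field_simp
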